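/- Let α ∈ (0,1], let g : ℕ^E → ℝ be normalized and nonnegative, let c be nonnegative linear, and let x ∈ ℕ^E be obtained from the zero vector by q steps: x_0 = 0, x_i = x_{i-1} + l_i·χ_{e_i}, x_q = x, with g(x_{i-1} + l_i·χ_{e_i}) − g(x_{i-1}) − (1+α)·c(l_i·χ_{e_i}) ≥ l_i·τ_α for each i. If x(E) = k, then g(x) − c(x) ≥ k·τ_α. (Lemma 3.3: the output of the streaming algorithm for αG−C with full cardinality k has value at least kτ_α.) -/
import Mathlib


/-- Lemma 3.3: the output of the streaming algorithm for αG−C with full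
cardinality k has value at least k·τ_α. -/
theorem stmt_8 {E : Type*} [Fintype E] [DecidableEq E]
    (α : ℝ) (hα0 : 0 < α) (hα1 : α ≤ 1)
    (g c : (E → ℕ) → ℝ)
    (hg0 : g 0 = 0) (hgnn : ∀ x : E → ℕ, 0 ≤ g x)
    (w : E → ℝ) (hw : ∀ e, 0 ≤ w e)
    (hc : ∀ x : E → ℕ, c x = ∑ e, w e * (x e : ℝ))
    (k : ℕ) (hk : 0 < k) (τα : ℝ)
    (q : ℕ) (e : ℕ → E) (l : ℕ → ℕ) (hl : ∀ i < q, 0 < l i)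
    (xs : ℕ → E → ℕ) (hx0 : xs 0 = 0)
    (hstep : ∀ i < q, xs (i + 1) = xs i + (l i) • Pi.single (e i) 1)
    (x : E → ℕ) (hxq : xs q = x)
    (hineq : ∀ i < q,
      g (xs i + (l i) • Pi.single (e i) 1) - g (xs i)
        - (1 + α) * c ((l i) • Pi.single (e i) 1) ≥ (l i : ℝ) * τα)
    (hcard : ∑ e', x e' = k) :
    g x - c x ≥ (k : ℝ) * τα := by
  have hcadd : ∀ a b : E → ℕ, c (a + b) = c a + c b := by
    intro a b
    simp only [hc, Pi.add_apply, Nat.cast_add, mul_add, Finset.sum_add_distrib]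
  have hc0 : c 0 = 0 := by simp [hc]
  have hcnn : ∀ a : E → ℕ, 0 ≤ c a := by
    intro a
    rw [hc]
    exact Finset.sum_nonneg fun i _ => mul_nonneg (hw i) (Nat.cast_nonneg _)
  -- main induction
  have main : ∀ i ≤ q,
      g (xs i) - (1 + α) * c (xs i) ≥ (∑ j ∈ Finset.range i, (l j : ℝ)) * τα ∧
      ∑ e', xs i e' = ∑ j ∈ Finset.range i, l j := by
    intro i hi
    induction i with
    | zero => simp [hx0, hg0, hc0]
    | succ n ih =>
      have hn : n < q := hi
      obtain ⟨ih1, ih2⟩ := ih (le_of_lt hn)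
      have hs := hstep n hn
      constructor
      · have h1 := hineq n hn
        rw [hs, hcadd]
        rw [Finset.sum_range_succ, add_mul]
        linarith [h1, ih1]
      · rw [hs]
        simp only [Pi.add_apply, Pi.smul_apply, smul_eq_mul, Finset.sum_add_distrib, ih2,
          Finset.sum_range_succ]
        congr 1
        rw [← Finset.mul_sum]
        simp
  obtain ⟨h1, h2⟩ := main q le_rfl
  rw [hxq] at h1 h2
  rw [hcard] at h2
  have hsum : (∑ j ∈ Finset.range q, (l j : ℝ)) = (k : ℝ) := by
    exact_mod_cast congrArg (Nat.cast : ℕ → ℝ) h2.symm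
  rw [hsum] at h1
  nlinarith [hcnn x, h1, hgnn x]
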